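/- Let P = {x ∈ ℝⁿ : Ax = b, Bx ≤ d} be a 0/1 polytope, let c ∈ ℤⁿ, and let x be a vertex of P that does not minimize cᵀx over P. Let αg be a maximal augmentation along a steepest edge at x, i.e., g is an edge-direction at x maximizing −cᵀg/‖g‖₁ among all edge-directions at x, and let α*g* be a greatest-improvement augmentation at x. Then cᵀx − cᵀ(x + αg) ≥ (1/n)·(cᵀx − cᵀ(x + α*g*)). -/

import Mathlib

noncomputable section

variable {n mA mB : ℕ}

/-- The real matrix obtained from an integer matrix. -/
def rmat {m k : Type*} (M : Matrix m k ℤ) : Matrix m k ℝ := M.map (fun z => (z : ℝ))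

/-- The real vector obtained from an integer vector. -/
def rvec {m : Type*} (v : m → ℤ) : m → ℝ := fun i => (v i : ℝ)

/-- The feasible region `P = {x : Ax = b, Bx ≤ d}`. -/
def Pset (A : Matrix (Fin mA) (Fin n) ℤ) (B : Matrix (Fin mB) (Fin n) ℤ)
    (b : Fin mA → ℤ) (d : Fin mB → ℤ) : Set (Fin n → ℝ) :=
  {x | (rmat A).mulVec x = rvec b ∧ ∀ i, (rmat B).mulVec x i ≤ (d i : ℝ)}

/-- `g` is a circuit of the system `Ax = b, Bx ≤ d`:  `g` is a nonzero kernel element of `A`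
whose image `Bg` is support-minimal among `{By : y ∈ ker A, y ≠ 0}`. -/
def IsCircuit (A : Matrix (Fin mA) (Fin n) ℤ) (B : Matrix (Fin mB) (Fin n) ℤ)
    (g : Fin n → ℝ) : Prop :=
  g ≠ 0 ∧ (rmat A).mulVec g = 0 ∧
    ∀ y : Fin n → ℝ, y ≠ 0 → (rmat A).mulVec y = 0 →
      ¬ ({i | (rmat B).mulVec y i ≠ 0} ⊂ {i | (rmat B).mulVec g i ≠ 0})

/-- The set `C(A,B)` of circuits, normalized to have coprime integer components. -/
def CAB (A : Matrix (Fin mA) (Fin n) ℤ) (B : Matrix (Fin mB) (Fin n) ℤ) :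
    Set (Fin n → ℝ) :=
  {g | IsCircuit A B g ∧ ∃ gz : Fin n → ℤ, (∀ i, g i = (gz i : ℝ)) ∧
        Finset.univ.gcd (fun i => (gz i).natAbs) = 1}

/-- `cᵀx` for an integer objective `c` and a real point `x`. -/
def dotIC (c : Fin n → ℤ) (x : Fin n → ℝ) : ℝ := ∑ i, (c i : ℝ) * x i

/-- The 1-norm of a vector. -/
def norm1 (x : Fin n → ℝ) : ℝ := ∑ i, |x i|

/-- `α g` is a maximal augmentation at `x` (within `P`). -/
def IsMaxAug (P : Set (Fin n → ℝ)) (x g : Fin n → ℝ) (α : ℝ) : Prop :=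
  0 < α ∧ x + α • g ∈ P ∧ ∀ ε : ℝ, 0 < ε → x + (α + ε) • g ∉ P

/-- `δ`: the largest absolute value of the determinant of an `n × n` submatrix of the
stacked matrix `(A; B)`. -/
def deltaMax (A : Matrix (Fin mA) (Fin n) ℤ) (B : Matrix (Fin mB) (Fin n) ℤ) : ℝ :=
  sSup {r : ℝ | ∃ f : Fin n → (Fin mA ⊕ Fin mB), Function.Injective f ∧
        r = |((((Matrix.fromRows A B).submatrix f id).det : ℤ) : ℝ)|}

/-- The feasible cone of `P = {Ax = b, Bx ≤ d}` at `x`: directions `z` with `Az = 0` and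
`B_T z ≤ 0`, where `T` is the set of rows of `B` tight at `x`. -/
def feasCone (A : Matrix (Fin mA) (Fin n) ℤ) (B : Matrix (Fin mB) (Fin n) ℤ)
    (d : Fin mB → ℤ) (x : Fin n → ℝ) : Set (Fin n → ℝ) :=
  {z | (rmat A).mulVec z = 0 ∧
       ∀ i, (rmat B).mulVec x i = (d i : ℝ) → (rmat B).mulVec z i ≤ 0}

/-- `g` is an edge-direction at the vertex `x`: it spans an extreme ray of the feasible
cone of `P` at `x`. -/
def IsEdgeDirAt (A : Matrix (Fin mA) (Fin n) ℤ) (B : Matrix (Fin mB) (Fin n) ℤ)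
    (d : Fin mB → ℤ) (x g : Fin n → ℝ) : Prop :=
  g ≠ 0 ∧ g ∈ feasCone A B d x ∧
    ∀ y ∈ feasCone A B d x, ∀ z ∈ feasCone A B d x, g = y + z →
      ∃ μ : ℝ, 0 ≤ μ ∧ y = μ • g

/-- A greatest-improvement augmentation at `x`. -/
def IsGIAug (A : Matrix (Fin mA) (Fin n) ℤ) (B : Matrix (Fin mB) (Fin n) ℤ)
    (P : Set (Fin n → ℝ)) (c : Fin n → ℤ) (x g : Fin n → ℝ) (α : ℝ) : Prop :=
  g ∈ CAB A B ∧ IsMaxAug P x g α ∧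
    ∀ (g' : Fin n → ℝ) (α' : ℝ), g' ∈ CAB A B → 0 < α' → x + α' • g' ∈ P →
      -(dotIC c (α' • g')) ≤ -(dotIC c (α • g))


section Aux

lemma dotIC_add (c : Fin n → ℤ) (x y : Fin n → ℝ) :
    dotIC c (x + y) = dotIC c x + dotIC c y := by
  simp [dotIC, mul_add, Finset.sum_add_distrib]

lemma dotIC_smul (c : Fin n → ℤ) (t : ℝ) (x : Fin n → ℝ) :
    dotIC c (t • x) = t * dotIC c x := by
  simp only [dotIC, Pi.smul_apply, smul_eq_mul, Finset.mul_sum]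
  exact Finset.sum_congr rfl fun i _ => by ring

lemma dotIC_cont (c : Fin n → ℤ) : Continuous (dotIC (n := n) c) :=
  continuous_finset_sum _ fun j _ => (continuous_const.mul (continuous_apply j))

lemma norm1_nonneg (x : Fin n → ℝ) : 0 ≤ norm1 x :=
  Finset.sum_nonneg fun _ _ => abs_nonneg _

lemma norm1_smul (t : ℝ) (x : Fin n → ℝ) : norm1 (t • x) = |t| * norm1 x := by
  simp [norm1, abs_mul, Finset.mul_sum]

lemma norm1_eq_zero {x : Fin n → ℝ} (hx : norm1 x = 0) : x = 0 := by
  have := (Finset.sum_eq_zero_iff_of_nonneg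
    (fun i (_ : i ∈ Finset.univ) => abs_nonneg (x i))).mp hx
  funext i
  simpa [abs_eq_zero] using this i (Finset.mem_univ i)

lemma norm1_pos {x : Fin n → ℝ} (hx : x ≠ 0) : 0 < norm1 x := by
  rcases lt_or_eq_of_le (norm1_nonneg x) with h | h
  · exact h
  · exact absurd (norm1_eq_zero h.symm) hx

lemma mulVec_cont (M : Matrix (Fin mA) (Fin n) ℝ) (i : Fin mA) :
    Continuous (fun x : Fin n → ℝ => M.mulVec x i) := by
  simp only [Matrix.mulVec, dotProduct]
  exact continuous_finset_sum _ fun j _ => (continuous_const.mul (continuous_apply j))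

lemma Pset_convex (A : Matrix (Fin mA) (Fin n) ℤ) (B : Matrix (Fin mB) (Fin n) ℤ)
    (b : Fin mA → ℤ) (d : Fin mB → ℤ) : Convex ℝ (Pset A B b d) := by
  intro p hp q hq a c ha hc hac
  constructor
  · rw [Matrix.mulVec_add, Matrix.mulVec_smul, Matrix.mulVec_smul, hp.1, hq.1]
    funext i
    simp only [Pi.add_apply, Pi.smul_apply, smul_eq_mul]
    rw [← add_mul, hac, one_mul]
  · intro i
    rw [Matrix.mulVec_add, Matrix.mulVec_smul, Matrix.mulVec_smul]
    have h1 := hp.2 i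
    have h2 := hq.2 i
    simp only [Pi.add_apply, Pi.smul_apply, smul_eq_mul]
    have hd : a * (d i : ℝ) + c * (d i : ℝ) = (d i : ℝ) := by rw [← add_mul, hac, one_mul]
    nlinarith [mul_le_mul_of_nonneg_left h1 ha, mul_le_mul_of_nonneg_left h2 hc]

lemma Pset_closed (A : Matrix (Fin mA) (Fin n) ℤ) (B : Matrix (Fin mB) (Fin n) ℤ)
    (b : Fin mA → ℤ) (d : Fin mB → ℤ) : IsClosed (Pset A B b d) := by
  have h1 : IsClosed {x : Fin n → ℝ | (rmat A).mulVec x = rvec b} := by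
    have : {x : Fin n → ℝ | (rmat A).mulVec x = rvec b} =
        ⋂ i, {x : Fin n → ℝ | (rmat A).mulVec x i = rvec b i} := by
      ext x; simp [funext_iff, Set.mem_iInter]
    rw [this]
    exact isClosed_iInter fun i => isClosed_eq (mulVec_cont _ i) continuous_const
  have h2 : IsClosed {x : Fin n → ℝ | ∀ i, (rmat B).mulVec x i ≤ (d i : ℝ)} := by
    have : {x : Fin n → ℝ | ∀ i, (rmat B).mulVec x i ≤ (d i : ℝ)} =
        ⋂ i, {x : Fin n → ℝ | (rmat B).mulVec x i ≤ (d i : ℝ)} := by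
      ext x; simp [Set.mem_iInter]
    rw [this]
    exact isClosed_iInter fun i => isClosed_le (mulVec_cont _ i) continuous_const
  exact h1.inter h2

lemma Pset_box (A : Matrix (Fin mA) (Fin n) ℤ) (B : Matrix (Fin mB) (Fin n) ℤ)
    (b : Fin mA → ℤ) (d : Fin mB → ℤ)
    (hbdd : Bornology.IsBounded (Pset A B b d))
    (h01 : ∀ v ∈ Set.extremePoints ℝ (Pset A B b d), ∀ i, v i = 0 ∨ v i = 1) :
    ∀ y ∈ Pset A B b d, ∀ i, 0 ≤ y i ∧ y i ≤ 1 := by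
  have hcomp : IsCompact (Pset A B b d) :=
    Metric.isCompact_of_isClosed_isBounded (Pset_closed A B b d) hbdd
  have hKM := closure_convexHull_extremePoints hcomp (Pset_convex A B b d)
  set D : Set (Fin n → ℝ) := {y | ∀ i, 0 ≤ y i ∧ y i ≤ 1} with hD
  have hDconv : Convex ℝ D := by
    intro p hp q hq a c ha hc hac i
    have h1 := hp i; have h2 := hq i
    constructor
    · simp only [Pi.add_apply, Pi.smul_apply, smul_eq_mul]
      nlinarith [mul_le_mul_of_nonneg_left h1.1 ha, mul_le_mul_of_nonneg_left h2.1 hc]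
    · simp only [Pi.add_apply, Pi.smul_apply, smul_eq_mul]
      nlinarith [mul_le_mul_of_nonneg_left h1.2 ha, mul_le_mul_of_nonneg_left h2.2 hc]
  have hDclosed : IsClosed D := by
    have : D = ⋂ i, ({y : Fin n → ℝ | 0 ≤ y i} ∩ {y : Fin n → ℝ | y i ≤ 1}) := by
      ext y; simp [hD, Set.mem_iInter, forall_and]
    rw [this]
    exact isClosed_iInter fun i =>
      (isClosed_le continuous_const (continuous_apply i)).inter
        (isClosed_le (continuous_apply i) continuous_const)
  have hsub : Set.extremePoints ℝ (Pset A B b d) ⊆ D := by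
    intro v hv i
    rcases h01 v hv i with h | h <;> simp [hD, h]
  intro y hy
  have : y ∈ D := by
    rw [← hKM] at hy
    exact (hDclosed.closure_subset_iff.mpr (convexHull_min hsub hDconv)) hy
  exact this

lemma sub_mem_feasCone (A : Matrix (Fin mA) (Fin n) ℤ) (B : Matrix (Fin mB) (Fin n) ℤ)
    (b : Fin mA → ℤ) (d : Fin mB → ℤ) {x p : Fin n → ℝ}
    (hx : x ∈ Pset A B b d) (hp : p ∈ Pset A B b d) :
    p - x ∈ feasCone A B d x := by
  constructor
  · rw [Matrix.mulVec_sub, hp.1, hx.1, sub_self]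
  · intro i hi
    have := hp.2 i
    rw [Matrix.mulVec_sub]
    simp only [Pi.sub_apply]
    rw [hi]
    linarith

lemma feasCone_smul (A : Matrix (Fin mA) (Fin n) ℤ) (B : Matrix (Fin mB) (Fin n) ℤ)
    (d : Fin mB → ℤ) {x : Fin n → ℝ} {t : ℝ} (ht : 0 ≤ t) {z : Fin n → ℝ}
    (hz : z ∈ feasCone A B d x) : t • z ∈ feasCone A B d x := by
  constructor
  · rw [Matrix.mulVec_smul, hz.1, smul_zero]
  · intro i hi
    rw [Matrix.mulVec_smul]
    simp only [Pi.smul_apply, smul_eq_mul]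
    exact mul_nonpos_of_nonneg_of_nonpos ht (hz.2 i hi)

lemma feasCone_add (A : Matrix (Fin mA) (Fin n) ℤ) (B : Matrix (Fin mB) (Fin n) ℤ)
    (d : Fin mB → ℤ) {x : Fin n → ℝ} {z w : Fin n → ℝ}
    (hz : z ∈ feasCone A B d x) (hw : w ∈ feasCone A B d x) :
    z + w ∈ feasCone A B d x := by
  constructor
  · rw [Matrix.mulVec_add, hz.1, hw.1, add_zero]
  · intro i hi
    rw [Matrix.mulVec_add]
    simp only [Pi.add_apply]
    linarith [hz.2 i hi, hw.2 i hi]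

lemma feasCone_closed (A : Matrix (Fin mA) (Fin n) ℤ) (B : Matrix (Fin mB) (Fin n) ℤ)
    (d : Fin mB → ℤ) (x : Fin n → ℝ) : IsClosed (feasCone A B d x) := by
  have h1 : IsClosed {z : Fin n → ℝ | (rmat A).mulVec z = 0} := by
    have : {z : Fin n → ℝ | (rmat A).mulVec z = 0} =
        ⋂ i, {z : Fin n → ℝ | (rmat A).mulVec z i = 0} := by
      ext z; simp [funext_iff, Set.mem_iInter]
    rw [this]
    exact isClosed_iInter fun i => isClosed_eq (mulVec_cont _ i) continuous_const
  have h2 : IsClosed {z : Fin n → ℝ | ∀ i, (rmat B).mulVec x i = (d i : ℝ) →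
      (rmat B).mulVec z i ≤ 0} := by
    have : {z : Fin n → ℝ | ∀ i, (rmat B).mulVec x i = (d i : ℝ) → (rmat B).mulVec z i ≤ 0} =
        ⋂ i, {z : Fin n → ℝ | (rmat B).mulVec x i = (d i : ℝ) → (rmat B).mulVec z i ≤ 0} := by
      ext z; simp [Set.mem_iInter]
    rw [this]
    refine isClosed_iInter fun i => ?_
    by_cases h : (rmat B).mulVec x i = (d i : ℝ)
    · have : {z : Fin n → ℝ | (rmat B).mulVec x i = (d i : ℝ) → (rmat B).mulVec z i ≤ 0} =
          {z : Fin n → ℝ | (rmat B).mulVec z i ≤ 0} := by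
        ext z; simp [h]
      rw [this]
      exact isClosed_le (mulVec_cont _ i) continuous_const
    · have : {z : Fin n → ℝ | (rmat B).mulVec x i = (d i : ℝ) → (rmat B).mulVec z i ≤ 0} =
          Set.univ := by
        ext z; simp [h]
      rw [this]
      exact isClosed_univ
  exact h1.inter h2

lemma feasCone_eps (A : Matrix (Fin mA) (Fin n) ℤ) (B : Matrix (Fin mB) (Fin n) ℤ)
    (b : Fin mA → ℤ) (d : Fin mB → ℤ) (hmB : 1 ≤ mB) {x : Fin n → ℝ}
    (hx : x ∈ Pset A B b d) {z : Fin n → ℝ} (hz : z ∈ feasCone A B d x) :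
    ∃ ε : ℝ, 0 < ε ∧ x + ε • z ∈ Pset A B b d := by
  classical
  have hne : (Finset.univ : Finset (Fin mB)).Nonempty := ⟨⟨0, hmB⟩, Finset.mem_univ _⟩
  set Bz := (rmat B).mulVec z with hBz
  set Bx := (rmat B).mulVec x with hBx
  set f : Fin mB → ℝ := fun i => if Bz i ≤ 0 then 1 else ((d i : ℝ) - Bx i) / Bz i with hf
  have hfpos : ∀ i, 0 < f i := by
    intro i
    by_cases h : Bz i ≤ 0
    · simp [hf, h]
    · simp only [hf, if_neg h]
      push_neg at h
      have hlt : Bx i < (d i : ℝ) := by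
        rcases lt_or_eq_of_le (hx.2 i) with h' | h'
        · exact h'
        · exact absurd (hz.2 i h') (not_le.mpr h)
      exact div_pos (by linarith) h
  set ε := Finset.univ.inf' hne f with hε
  have hεpos : 0 < ε := (Finset.lt_inf'_iff hne).mpr fun i _ => hfpos i
  refine ⟨ε, hεpos, ?_, ?_⟩
  · rw [Matrix.mulVec_add, Matrix.mulVec_smul, hz.1, smul_zero, add_zero]
    exact hx.1
  · intro i
    rw [Matrix.mulVec_add, Matrix.mulVec_smul]
    simp only [Pi.add_apply, Pi.smul_apply, smul_eq_mul]
    by_cases h : Bz i ≤ 0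
    · have h1 := hx.2 i
      have h2 : ε * Bz i ≤ 0 := mul_nonpos_of_nonneg_of_nonpos hεpos.le h
      rw [← hBx, ← hBz]
      linarith
    · push_neg at h
      have hεle : ε ≤ ((d i : ℝ) - Bx i) / Bz i := by
        have h' : ε ≤ f i := Finset.inf'_le _ (Finset.mem_univ i)
        simpa only [hf, if_neg (not_le.mpr h)] using h'
      have hkey : ε * Bz i ≤ (d i : ℝ) - Bx i := by
        have := mul_le_mul_of_nonneg_right hεle h.le
        rwa [div_mul_cancel₀ _ (ne_of_gt h)] at this
      rw [← hBx, ← hBz]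
      linarith

lemma feasCone_sign (A : Matrix (Fin mA) (Fin n) ℤ) (B : Matrix (Fin mB) (Fin n) ℤ)
    (b : Fin mA → ℤ) (d : Fin mB → ℤ) (hmB : 1 ≤ mB) {x : Fin n → ℝ}
    (hx : x ∈ Pset A B b d)
    (hbox : ∀ y ∈ Pset A B b d, ∀ i, 0 ≤ y i ∧ y i ≤ 1)
    {z : Fin n → ℝ} (hz : z ∈ feasCone A B d x) :
    ∀ i, (x i = 0 → 0 ≤ z i) ∧ (x i = 1 → z i ≤ 0) := by
  obtain ⟨ε, hεpos, hmem⟩ := feasCone_eps A B b d hmB hx hz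
  intro i
  have h1 := (hbox _ hmem i).1
  have h2 := (hbox _ hmem i).2
  simp only [Pi.add_apply, Pi.smul_apply, smul_eq_mul] at h1 h2
  constructor
  · intro h0
    rw [h0] at h1
    nlinarith
  · intro h0
    rw [h0] at h2
    nlinarith

end Aux

/-- Theorem 7 of the paper: on a 0/1-LP, a maximal augmentation along a
steepest edge at a vertex is an `n`-approximate greatest-improvement augmentation. -/
theorem steepest_edge_n_approximation
    (A : Matrix (Fin mA) (Fin n) ℤ) (B : Matrix (Fin mB) (Fin n) ℤ)
    (b : Fin mA → ℤ) (d : Fin mB → ℤ) (c : Fin n → ℤ)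
    (hmB : 1 ≤ mB)
    (hA : (rmat A).rank = mA)
    (hAB : (rmat (Matrix.fromRows A B)).rank = n)
    (hbdd : Bornology.IsBounded (Pset A B b d))
    (h01 : ∀ v ∈ Set.extremePoints ℝ (Pset A B b d), ∀ i, v i = 0 ∨ v i = 1)
    (x : Fin n → ℝ) (hx : x ∈ Set.extremePoints ℝ (Pset A B b d))
    (hnonopt : ∃ y ∈ Pset A B b d, dotIC c y < dotIC c x)
    (g : Fin n → ℝ) (α : ℝ)
    (hedge : IsEdgeDirAt A B d x g)
    (hsteepest : ∀ g' : Fin n → ℝ, IsEdgeDirAt A B d x g' →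
      -(dotIC c g') / norm1 g' ≤ -(dotIC c g) / norm1 g)
    (hmax : IsMaxAug (Pset A B b d) x g α)
    (gs : Fin n → ℝ) (αs : ℝ)
    (hgia : IsGIAug A B (Pset A B b d) c x gs αs) :
    (1 / (n : ℝ)) * (dotIC c x - dotIC c (x + αs • gs)) ≤
      dotIC c x - dotIC c (x + α • g) := by
  classical
  -- dispatch the degenerate case `n = 0`
  rcases Nat.eq_zero_or_pos n with hn0 | hn
  · exfalso
    obtain ⟨y, _, hy⟩ := hnonopt
    have hyx : y = x := by subst hn0; exact funext fun i => i.elim0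
    rw [hyx] at hy; exact lt_irrefl _ hy
  have hxP : x ∈ Pset A B b d := hx.1
  have hbox := Pset_box A B b d hbdd h01
  have hx01 : ∀ i, x i = 0 ∨ x i = 1 := h01 x hx
  set s : ℝ := -(dotIC c g) / norm1 g with hs_def
  have hgne : g ≠ 0 := hedge.1
  have hng : 0 < norm1 g := norm1_pos hgne
  -- the linear functional `L` agreeing with the 1-norm on the feasible cone
  set e : Fin n → ℝ := fun i => 1 - 2 * x i with he
  set L : (Fin n → ℝ) → ℝ := fun z => ∑ i, e i * z i with hL
  have hLnorm : ∀ z ∈ feasCone A B d x, L z = norm1 z := by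
    intro z hz
    have hsign := feasCone_sign A B b d hmB hxP hbox hz
    refine Finset.sum_congr rfl fun i _ => ?_
    rcases hx01 i with h | h
    · have h2 := (hsign i).1 h
      simp [he, h, abs_of_nonneg h2]
    · have h2 := (hsign i).2 h
      simp [he, h, abs_of_nonpos h2]
      ring
  have hLadd : ∀ y z : Fin n → ℝ, L (y + z) = L y + L z := by
    intro y z
    simp [hL, mul_add, Finset.sum_add_distrib]
  have hLsmul : ∀ (t : ℝ) (z : Fin n → ℝ), L (t • z) = t * L z := by
    intro t z
    simp only [hL, Pi.smul_apply, smul_eq_mul, Finset.mul_sum]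
    exact Finset.sum_congr rfl fun i _ => by ring
  have hLcont : Continuous L :=
    continuous_finset_sum _ fun j _ => (continuous_const.mul (continuous_apply j))
  have hL0 : L 0 = 0 := by simp [hL]
  -- the compact convex base `K` of the feasible cone
  set K : Set (Fin n → ℝ) := feasCone A B d x ∩ {z | L z = 1} with hK
  have hKconv : Convex ℝ K := by
    intro p hp q hq a c' ha hc hac
    refine ⟨feasCone_add A B d (feasCone_smul A B d ha hp.1) (feasCone_smul A B d hc hq.1), ?_⟩
    simp only [Set.mem_setOf_eq]
    rw [hLadd, hLsmul, hLsmul, hp.2, hq.2, mul_one, mul_one, hac]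
  have hKcomp : IsCompact K := by
    have hclosed : IsClosed K :=
      (feasCone_closed A B d x).inter (isClosed_eq hLcont continuous_const)
    have hsub : K ⊆ Metric.closedBall 0 1 := by
      intro z hz
      rw [Metric.mem_closedBall, dist_zero_right]
      refine (pi_norm_le_iff_of_nonneg (by norm_num)).mpr fun i => ?_
      have h1 : |z i| ≤ norm1 z :=
        Finset.single_le_sum (fun j (_ : j ∈ Finset.univ) => abs_nonneg (z j))
          (Finset.mem_univ i)
      rw [← hLnorm z hz.1, hz.2] at h1
      simpa [Real.norm_eq_abs] using h1
    exact Metric.isCompact_of_isClosed_isBounded hclosed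
      (Metric.isBounded_closedBall.subset hsub)
  -- extreme points of `K` are edge-directions at `x`
  have hext : ∀ w ∈ Set.extremePoints ℝ K, IsEdgeDirAt A B d x w := by
    intro w hw
    obtain ⟨⟨hwC, hwL⟩, hwext⟩ := hw
    refine ⟨?_, hwC, ?_⟩
    · intro h0
      rw [h0] at hwL
      simp only [Set.mem_setOf_eq] at hwL
      rw [hL0] at hwL
      norm_num at hwL
    · intro y hy z hz hyz
      have hLy : L y = norm1 y := hLnorm y hy
      have hLz : L z = norm1 z := hLnorm z hz
      have hsum : L y + L z = 1 := by
        have := hwL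
        simp only [Set.mem_setOf_eq] at this
        rw [hyz, hLadd] at this
        exact this
      rcases eq_or_lt_of_le (norm1_nonneg y) with hy0 | hy0
      · have : y = 0 := norm1_eq_zero hy0.symm
        exact ⟨0, le_refl 0, by rw [this, zero_smul]⟩
      rcases eq_or_lt_of_le (norm1_nonneg z) with hz0 | hz0
      · have hz' : z = 0 := norm1_eq_zero hz0.symm
        refine ⟨1, by norm_num, ?_⟩
        rw [one_smul, hyz, hz', add_zero]
      · -- both parts nonzero: use extremality of `w` in `K`
        set a : ℝ := norm1 y with ha
        set b' : ℝ := norm1 z with hb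
        have hab : a + b' = 1 := by rw [← hLy, ← hLz]; exact hsum
        have hyK : a⁻¹ • y ∈ K := by
          refine ⟨feasCone_smul A B d (inv_nonneg.mpr hy0.le) hy, ?_⟩
          simp only [Set.mem_setOf_eq]
          rw [hLsmul, hLy, inv_mul_cancel₀ (ne_of_gt hy0)]
        have hzK : b'⁻¹ • z ∈ K := by
          refine ⟨feasCone_smul A B d (inv_nonneg.mpr hz0.le) hz, ?_⟩
          simp only [Set.mem_setOf_eq]
          rw [hLsmul, hLz, inv_mul_cancel₀ (ne_of_gt hz0)]
        have hseg : w ∈ openSegment ℝ (a⁻¹ • y) (b'⁻¹ • z) := by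
          refine ⟨a, b', hy0, hz0, hab, ?_⟩
          rw [smul_smul, smul_smul, mul_inv_cancel₀ (ne_of_gt hy0),
            mul_inv_cancel₀ (ne_of_gt hz0), one_smul, one_smul, hyz]
        have := hwext hyK hzK hseg
        refine ⟨a, hy0.le, ?_⟩
        rw [← this, smul_smul, mul_inv_cancel₀ (ne_of_gt hy0), one_smul]
  -- the key inequality : `-cᵀz ≤ s ‖z‖₁` on the feasible cone
  have hkey : ∀ z ∈ feasCone A B d x, -(dotIC c z) ≤ s * norm1 z := by
    intro z hzC
    by_cases hz0 : z = 0
    · subst hz0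
      have h1 : dotIC (n := n) c 0 = 0 := by simp [dotIC]
      have h2 : norm1 (0 : Fin n → ℝ) = 0 := by simp [norm1]
      rw [h1, h2, mul_zero, neg_zero]
    · have ht : 0 < norm1 z := norm1_pos hz0
      have hzK : (norm1 z)⁻¹ • z ∈ K := by
        refine ⟨feasCone_smul A B d (inv_nonneg.mpr ht.le) hzC, ?_⟩
        simp only [Set.mem_setOf_eq]
        rw [hLsmul, hLnorm z hzC, inv_mul_cancel₀ (ne_of_gt ht)]
      have hKM := closure_convexHull_extremePoints hKcomp hKconv
      set H : Set (Fin n → ℝ) := {w | -(dotIC c w) ≤ s} with hH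
      have hHclosed : IsClosed H := isClosed_le (dotIC_cont c).neg continuous_const
      have hHconv : Convex ℝ H := by
        intro p hp q hq a c' ha hc hac
        simp only [hH, Set.mem_setOf_eq] at hp hq ⊢
        rw [dotIC_add, dotIC_smul, dotIC_smul]
        have hd : a * s + c' * s = s := by rw [← add_mul, hac, one_mul]
        nlinarith [mul_le_mul_of_nonneg_left hp ha, mul_le_mul_of_nonneg_left hq hc]
      have hextH : Set.extremePoints ℝ K ⊆ H := by
        intro w hw
        have hw1 : norm1 w = 1 := by
          rw [← hLnorm w hw.1.1]
          exact hw.1.2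
        have := hsteepest w (hext w hw)
        simp only [hH, Set.mem_setOf_eq]
        rw [hw1, div_one] at this
        exact this
      have hKH : K ⊆ H := by
        rw [← hKM]
        exact hHclosed.closure_subset_iff.mpr (convexHull_min hextH hHconv)
      have := hKH hzK
      simp only [hH, Set.mem_setOf_eq] at this
      rw [dotIC_smul] at this
      have h2 := mul_le_mul_of_nonneg_left this ht.le
      calc -(dotIC c z) = norm1 z * -((norm1 z)⁻¹ * dotIC c z) := by
            field_simp
        _ ≤ norm1 z * s := h2
        _ = s * norm1 z := mul_comm _ _
  -- the steepness `s` is positive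
  have hspos : 0 < s := by
    obtain ⟨y, hyP, hy⟩ := hnonopt
    have hz : y - x ∈ feasCone A B d x := sub_mem_feasCone A B b d hxP hyP
    have h1 : -(dotIC c (y - x)) = dotIC c x - dotIC c y := by
      have : y = x + (y - x) := by abel
      have h2 : dotIC c y = dotIC c x + dotIC c (y - x) := by
        conv_lhs => rw [this]
        exact dotIC_add c x (y - x)
      linarith
    have h3 := hkey _ hz
    rw [h1] at h3
    by_contra h
    push_neg at h
    nlinarith [norm1_nonneg (y - x)]
  -- `x + α • g` is a vertex of `P`
  have hvert : x + α • g ∈ Set.extremePoints ℝ (Pset A B b d) := by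
    refine ⟨hmax.2.1, ?_⟩
    intro p hp q hq hseg
    obtain ⟨a, b', ha, hb, hab, hsum⟩ := hseg
    have hα : 0 < α := hmax.1
    -- both `p` and `q` lie on the ray `x + ℝ≥0 • g`
    have hray : ∀ r ∈ Pset A B b d, ∀ r' ∈ Pset A B b d, ∀ ar br : ℝ, 0 < ar → 0 < br →
        ar + br = 1 → ar • r + br • r' = x + α • g → ∃ β : ℝ, 0 ≤ β ∧ β ≤ α ∧ r = x + β • g := by
      intro r hr r' hr' ar br har hbr harbr hsum'
      have hyC : r - x ∈ feasCone A B d x := sub_mem_feasCone A B b d hxP hr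
      have hzC : r' - x ∈ feasCone A B d x := sub_mem_feasCone A B b d hxP hr'
      have hYC : (α⁻¹ * ar) • (r - x) ∈ feasCone A B d x :=
        feasCone_smul A B d (by positivity) hyC
      have hZC : (α⁻¹ * br) • (r' - x) ∈ feasCone A B d x :=
        feasCone_smul A B d (by positivity) hzC
      have hYZ : g = (α⁻¹ * ar) • (r - x) + (α⁻¹ * br) • (r' - x) := by
        have h1 : ar • (r - x) + br • (r' - x) = α • g := by
          have : ar • r + br • r' - (ar + br) • x = α • g := by
            rw [harbr, one_smul, hsum']; abel
          rw [← this, add_smul]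
          module
        have h2 : (α⁻¹ * ar) • (r - x) + (α⁻¹ * br) • (r' - x)
            = α⁻¹ • (ar • (r - x) + br • (r' - x)) := by module
        rw [h2, h1, smul_smul, inv_mul_cancel₀ (ne_of_gt hα), one_smul]
      obtain ⟨μ, hμ, hμeq⟩ := hedge.2.2 _ hYC _ hZC hYZ
      have hrx : r - x = (α * μ / ar) • g := by
        have hne : (α⁻¹ * ar) ≠ 0 := ne_of_gt (by positivity)
        have h4 := congrArg (fun v : Fin n → ℝ => (α⁻¹ * ar)⁻¹ • v) hμeq
        simp only [smul_smul] at h4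
        rw [inv_mul_cancel₀ hne, one_smul] at h4
        have e2 : (α⁻¹ * ar)⁻¹ * μ = α * μ / ar := by
          field_simp
        rw [e2] at h4
        exact h4
      refine ⟨α * μ / ar, by positivity, ?_, by rw [← hrx]; abel⟩
      by_contra hgt
      push_neg at hgt
      have hrP : x + (α + (α * μ / ar - α)) • g ∈ Pset A B b d := by
        have : α + (α * μ / ar - α) = α * μ / ar := by ring
        rw [this, ← hrx]
        have : x + (r - x) = r := by abel
        rw [this]
        exact hr
      exact hmax.2.2 _ (by linarith) hrP
    obtain ⟨β, hβ0, hβα, hpeq⟩ := hray p hp q hq a b' ha hb hab hsum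
    obtain ⟨β', hβ'0, hβ'α, hqeq⟩ := hray q hq p hp b' a hb ha (by linarith)
      (by rw [← hsum]; abel)
    -- combination forces `β = β' = α`
    have hcomb : (a * β + b' * β') • g = α • g := by
      have h1 : a • p + b' • q = x + (a * β + b' * β') • g := by
        rw [hpeq, hqeq]
        have : (a + b') • x = x := by rw [hab, one_smul]
        calc a • (x + β • g) + b' • (x + β' • g)
            = (a + b') • x + (a * β + b' * β') • g := by module
          _ = x + (a * β + b' * β') • g := by rw [this]
      rw [h1] at hsum
      have := add_left_cancel hsum
      exact this
    have hcoef : a * β + b' * β' = α := by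
      have h0 : ((a * β + b' * β') - α) • g = 0 := by
        rw [sub_smul, hcomb, sub_self]
      rcases smul_eq_zero.mp h0 with h | h
      · linarith [h]
      · exact absurd h hgne
    have hβeq : β = α ∧ β' = α := by
      constructor <;> nlinarith
    rw [hpeq, hβeq.1]
  -- `‖α g‖₁ ≥ 1`
  have hnge1 : 1 ≤ norm1 (α • g) := by
    have hv01 := h01 _ hvert
    have hαgne : α • g ≠ 0 := smul_ne_zero (ne_of_gt hmax.1) hgne
    have hex : ∃ i, (α • g) i ≠ 0 := by
      by_contra h
      push_neg at h
      exact hαgne (funext fun i => h i)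
    obtain ⟨i, hi⟩ := hex
    have h1 : |(α • g) i| = 1 := by
      have hxi := hx01 i
      have hvi := hv01 i
      simp only [Pi.add_apply] at hvi
      rcases hxi with h | h <;> rcases hvi with h' | h' <;>
        [skip; skip; skip; skip] <;>
        · rw [h] at h'
          first
          | (exfalso; apply hi; linarith)
          | (rw [show (α • g) i = 1 by linarith]; norm_num)
          | (rw [show (α • g) i = -1 by linarith]; norm_num)
    calc (1 : ℝ) = |(α • g) i| := h1.symm
      _ ≤ norm1 (α • g) :=
          Finset.single_le_sum (fun j (_ : j ∈ Finset.univ) => abs_nonneg ((α • g) j))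
            (Finset.mem_univ i)
  -- `αs • gs` lies in the feasible cone and has small 1-norm
  have hgsP : x + αs • gs ∈ Pset A B b d := hgia.2.1.2.1
  have hCs : αs • gs ∈ feasCone A B d x := by
    have := sub_mem_feasCone A B b d hxP hgsP
    simpa using this
  have hnle : norm1 (αs • gs) ≤ (n : ℝ) := by
    have h1 : ∀ i, |(αs • gs) i| ≤ 1 := by
      intro i
      have hxi := hbox x hxP i
      have hyi := hbox _ hgsP i
      simp only [Pi.add_apply] at hyi
      rw [abs_le]
      constructor <;> linarith [hxi.1, hxi.2, hyi.1, hyi.2]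
    calc norm1 (αs • gs) = ∑ i, |(αs • gs) i| := rfl
      _ ≤ ∑ _i : Fin n, (1 : ℝ) := Finset.sum_le_sum fun i _ => h1 i
      _ = (n : ℝ) := by simp
  -- putting everything together
  have hgoal1 : dotIC c x - dotIC c (x + αs • gs) = -(dotIC c (αs • gs)) := by
    rw [dotIC_add]; ring
  have hgoal2 : dotIC c x - dotIC c (x + α • g) = -(dotIC c (α • g)) := by
    rw [dotIC_add]; ring
  have hRHS : -(dotIC c (α • g)) = s * norm1 (α • g) := by
    rw [dotIC_smul, norm1_smul, abs_of_pos hmax.1, hs_def]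
    field_simp
  have h1 : -(dotIC c (αs • gs)) ≤ s * norm1 (αs • gs) := hkey _ hCs
  have h2 : s * norm1 (αs • gs) ≤ s * n := mul_le_mul_of_nonneg_left hnle hspos.le
  have h3 : s ≤ s * norm1 (α • g) := by nlinarith
  have hnpos : (0 : ℝ) < n := by exact_mod_cast hn
  rw [hgoal1, hgoal2, hRHS]
  have h4 : (1 / (n : ℝ)) * -(dotIC c (αs • gs)) ≤ (1 / (n : ℝ)) * (s * n) := by
    apply mul_le_mul_of_nonneg_left _ (by positivity)
    linarith
  have h5 : (1 / (n : ℝ)) * (s * n) = s := by field_simp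
  linarith
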